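/- Let P be a finite atomic lattice and let M = {m_p} be a labeling of elements of P by monomials in a polynomial ring such that (C1) every meet-irreducible element of P receives a nontrivial monomial label, and (C2) whenever gcd(m_p, m_q) ≠ 1 for two labeled elements p, q, the elements p and q are comparable in P. Then the monomial ideal M_M generated by x(a) = ∏_{p ∈ (⌈a⌉)^c} m_p, for a ranging over the atoms of P, has lcm lattice isomorphic to P. -/

import Mathlib

open scoped Classical

/-- Monomials in variables `V`, represented by exponent vectors.
Multiplication is `+`, divisibility is `≤`, gcd is `⊓`, lcm is `⊔`, and the
trivial monomial `1` is `0`. -/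
abbrev Monomial (V : Type*) := V →₀ ℕ

/-- An element `x` is meet-irreducible if `x ≠ ⊤` and `x ≠ a ⊓ b` for all `a, b > x`. -/
def MeetIrred {P : Type*} [Lattice P] [OrderTop P] (x : P) : Prop :=
  x ≠ ⊤ ∧ ∀ a b : P, x < a → x < b → x ≠ a ⊓ b

/-- A finite lattice is atomic if every element other than `⊥` is the join of
the atoms below it. -/
def IsFinAtomic (P : Type*) [Lattice P] [BoundedOrder P] : Prop :=
  ∀ p : P, p ≠ ⊥ → IsLUB {a : P | IsAtom a ∧ a ≤ p} p

/-- The monomial `x(a) = ∏_{p ∈ (⌈a⌉)ᶜ} m_p` attached to `a` by a labeling `m`. -/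
noncomputable def coordGen {P V : Type*} [PartialOrder P] [Fintype P]
    (m : P → Monomial V) (a : P) : Monomial V :=
  ∑ p ∈ Finset.univ.filter (fun p : P => ¬ a ≤ p), m p

/-- The lcm lattice of a finite family of monomials: all least common multiples
of subsets of the family (the empty lcm being `1`), ordered by divisibility. -/
abbrev LcmLat {ι V : Type*} [Fintype ι] (g : ι → Monomial V) : Type _ :=
  {l : Monomial V // ∃ s : Finset ι, l = s.sup g}

/-- Condition (C1): every meet-irreducible element has a nontrivial label. -/
def CondC1 {P V : Type*} [Lattice P] [BoundedOrder P] (m : P → Monomial V) : Prop :=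
  ∀ p : P, MeetIrred p → m p ≠ 0

/-- Condition (C2): labels with a common variable sit on comparable elements. -/
def CondC2 {P V : Type*} [PartialOrder P] (m : P → Monomial V) : Prop :=
  ∀ p q : P, m p ⊓ m q ≠ 0 → p ≤ q ∨ q ≤ p

/-- A labeling is a coordinatization if the lcm lattice of the ideal generated
by the monomials `x(a)`, for `a` ranging over the atoms, is isomorphic to `P`. -/
def IsCoordinatization {P V : Type*} [PartialOrder P] [OrderBot P] [Fintype P]
    (m : P → Monomial V) : Prop :=
  Nonempty (P ≃o LcmLat (fun a : {a : P // IsAtom a} => coordGen m a.val))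

/- ## Auxiliary lemmas -/

lemma finsupp_finset_sup_apply {V ι : Type*} (s : Finset ι) (f : ι → Monomial V) (v : V) :
    (s.sup f) v = s.sup (fun i => f i v) := by
  classical
  induction s using Finset.induction with
  | empty => simp [Finsupp.bot_eq_zero]
  | insert a s h ih => simp [Finsupp.sup_apply, ih]

section Main
variable {P V : Type*} [Lattice P] [BoundedOrder P] [Fintype P]

lemma coordGen_apply (m : P → Monomial V) (a : P) (v : V) :
    coordGen m a v = ∑ p ∈ Finset.univ.filter (fun p : P => ¬ a ≤ p), m p v :=
  Finset.sum_apply' v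

lemma coordGen_mono (m : P → Monomial V) : Monotone (coordGen m) := by
  intro p q hpq
  rw [Finsupp.le_def]
  intro v
  rw [coordGen_apply, coordGen_apply]
  apply Finset.sum_le_sum_of_subset
  intro r hr
  simp only [Finset.mem_filter, Finset.mem_univ, true_and] at hr ⊢
  exact fun h => hr (hpq.trans h)

lemma comparable_of_C2 {m : P → Monomial V} (h2 : CondC2 m) {v : V} {p q : P}
    (hp : m p v ≠ 0) (hq : m q v ≠ 0) : p ≤ q ∨ q ≤ p := by
  apply h2
  intro h
  have h0 : (m p ⊓ m q) v = 0 := by rw [h]; rfl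
  rw [Finsupp.inf_apply] at h0
  omega

lemma key_sup {m : P → Monomial V} (h2 : CondC2 m) (s : Finset P) :
    s.sup (coordGen m) = coordGen m (s.sup id) := by
  apply le_antisymm
  · exact Finset.sup_le fun a ha => coordGen_mono m (Finset.le_sup (f := id) ha)
  · rw [Finsupp.le_def]
    intro v
    set p := s.sup id with hpdef
    rw [coordGen_apply, finsupp_finset_sup_apply]
    set A := (Finset.univ.filter (fun q : P => ¬ p ≤ q)).filter (fun q => m q v ≠ 0) with hA
    have hsum : ∑ q ∈ Finset.univ.filter (fun q : P => ¬ p ≤ q), m q v = ∑ q ∈ A, m q v :=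
      (Finset.sum_filter_ne_zero _).symm
    rw [hsum]
    by_cases hAe : A.Nonempty
    swap
    · simp [Finset.not_nonempty_iff_eq_empty.mp hAe]
    obtain ⟨q0, hq0A, hq0max⟩ : ∃ q0 ∈ A, ∀ q ∈ A, q ≤ q0 := by
      obtain ⟨q0, hq0, hmax⟩ := Set.Finite.exists_maximalFor id (↑A : Set P)
        (Set.toFinite _) (by exact_mod_cast hAe)
      have hq0' : q0 ∈ A := by exact_mod_cast hq0
      refine ⟨q0, hq0', fun q hq => ?_⟩
      have hqv : m q v ≠ 0 := (Finset.mem_filter.mp hq).2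
      have hq0v : m q0 v ≠ 0 := (Finset.mem_filter.mp hq0').2
      rcases comparable_of_C2 h2 hqv hq0v with h | h
      · exact h
      · exact hmax (by exact_mod_cast hq) h
    have hq0p : ¬ p ≤ q0 := by
      have := (Finset.mem_filter.mp hq0A).1
      exact (Finset.mem_filter.mp this).2
    obtain ⟨a, has, haq0⟩ : ∃ a ∈ s, ¬ a ≤ q0 := by
      by_contra hcon
      push_neg at hcon
      exact hq0p (Finset.sup_le fun b hb => hcon b hb)
    calc ∑ q ∈ A, m q v
        ≤ ∑ q ∈ Finset.univ.filter (fun q : P => ¬ a ≤ q), m q v := by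
          apply Finset.sum_le_sum_of_subset
          intro q hq
          simp only [Finset.mem_filter, Finset.mem_univ, true_and]
          intro haq
          exact haq0 (haq.trans (hq0max q hq))
      _ = coordGen m a v := (coordGen_apply m a v).symm
      _ ≤ s.sup (fun b => coordGen m b v) :=
          Finset.le_sup (f := fun b => coordGen m b v) has

lemma exists_meetIrred {p p' : P} (h : ¬ p ≤ p') :
    ∃ q : P, MeetIrred q ∧ p' ≤ q ∧ ¬ p ≤ q := by
  have hS : ({x : P | p' ≤ x ∧ ¬ p ≤ x}).Nonempty := ⟨p', le_rfl, h⟩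
  obtain ⟨q, hqS, hmax⟩ := Set.Finite.exists_maximalFor id _ (Set.toFinite _) hS
  refine ⟨q, ⟨?_, ?_⟩, hqS.1, hqS.2⟩
  · rintro rfl; exact hqS.2 le_top
  · intro a b ha hb hq
    have hpa : p ≤ a := by
      by_contra hpa
      exact lt_irrefl q (lt_of_lt_of_le ha (hmax ⟨hqS.1.trans ha.le, hpa⟩ ha.le))
    have hpb : p ≤ b := by
      by_contra hpb
      exact lt_irrefl q (lt_of_lt_of_le hb (hmax ⟨hqS.1.trans hb.le, hpb⟩ hb.le))
    exact hqS.2 (hq ▸ le_inf hpa hpb)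

lemma coordGen_reflect {m : P → Monomial V} (h1 : CondC1 m) (h2 : CondC2 m) {p p' : P}
    (h : coordGen m p ≤ coordGen m p') : p ≤ p' := by
  by_contra hpp
  obtain ⟨q, hqI, hp'q, hpq⟩ := exists_meetIrred hpp
  obtain ⟨v, hv⟩ : ∃ v, m q v ≠ 0 := by
    by_contra hc
    push_neg at hc
    exact h1 q hqI (Finsupp.ext hc)
  have hle := (Finsupp.le_def.mp h) v
  rw [coordGen_apply, coordGen_apply] at hle
  set B := (Finset.univ.filter (fun r : P => ¬ p' ≤ r)).filter (fun r => m r v ≠ 0) with hB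
  have hsum : ∑ r ∈ Finset.univ.filter (fun r : P => ¬ p' ≤ r), m r v = ∑ r ∈ B, m r v :=
    (Finset.sum_filter_ne_zero _).symm
  rw [hsum] at hle
  have hqB : q ∉ B := by
    intro hq
    exact (Finset.mem_filter.mp (Finset.mem_filter.mp hq).1).2 hp'q
  have hsub : insert q B ⊆ Finset.univ.filter (fun r : P => ¬ p ≤ r) := by
    intro r hr
    simp only [Finset.mem_filter, Finset.mem_univ, true_and]
    rcases Finset.mem_insert.mp hr with rfl | hr
    · exact hpq
    · obtain ⟨hr1, hrv⟩ := Finset.mem_filter.mp hr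
      have hr2 := (Finset.mem_filter.mp hr1).2
      intro hpr
      rcases comparable_of_C2 h2 hrv hv with hrq | hqr
      · exact hpq (hpr.trans hrq)
      · exact hr2 (hp'q.trans hqr)
    
  have hbig : m q v + ∑ r ∈ B, m r v
      ≤ ∑ r ∈ Finset.univ.filter (fun r : P => ¬ p ≤ r), m r v := by
    have he : ∑ r ∈ insert q B, m r v = m q v + ∑ r ∈ B, m r v :=
      Finset.sum_insert hqB
    rw [← he]
    exact Finset.sum_le_sum_of_subset hsub
  omega

lemma atoms_sup (hP : IsFinAtomic P) (p : P) :
    (Finset.univ.filter (fun a : P => IsAtom a ∧ a ≤ p)).sup id = p := by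
  by_cases hp : p = ⊥
  · subst hp
    have he : Finset.univ.filter (fun a : P => IsAtom a ∧ a ≤ ⊥) = ∅ := by
      ext a
      simp only [Finset.mem_filter, Finset.mem_univ, true_and, Finset.notMem_empty, iff_false]
      rintro ⟨ha, hab⟩
      exact ha.1 (le_bot_iff.mp hab)
    simp [he]
  · have hlub := hP p hp
    apply le_antisymm
    · exact Finset.sup_le fun a ha => ((Finset.mem_filter.mp ha).2).2
    · exact hlub.2 fun a ha =>
        Finset.le_sup (f := id) (Finset.mem_filter.mpr ⟨Finset.mem_univ a, ha⟩)

end Main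

/-- Theorem 3.2 of Mapes: a labeling of a finite atomic lattice
satisfying (C1) and (C2) is a coordinatization, i.e. the lcm lattice of the
ideal generated by the `x(a)` is isomorphic to `P`. -/
theorem stmt0 {P V : Type*} [Lattice P] [BoundedOrder P] [Fintype P]
    (hP : IsFinAtomic P) (m : P → Monomial V)
    (h1 : CondC1 m) (h2 : CondC2 m) :
    IsCoordinatization m := by
  classical
  set g : {a : P // IsAtom a} → Monomial V := fun a => coordGen m a.val with hg
  have himg : ∀ p : P,
      (Finset.univ.filter (fun a : {a : P // IsAtom a} => a.val ≤ p)).image Subtype.val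
        = Finset.univ.filter (fun a : P => IsAtom a ∧ a ≤ p) := by
    intro p
    ext x
    simp only [Finset.mem_image, Finset.mem_filter, Finset.mem_univ, true_and]
    constructor
    · rintro ⟨a, ha, rfl⟩; exact ⟨a.2, ha⟩
    · rintro ⟨hx, hxp⟩; exact ⟨⟨x, hx⟩, hxp, rfl⟩
  have himgset : ∀ s : Finset {a : P // IsAtom a},
      s.sup g = coordGen m ((s.image Subtype.val).sup id) := by
    intro s
    rw [← key_sup h2, Finset.sup_image]
    rfl
  have hφval : ∀ p : P,
      (Finset.univ.filter (fun a : {a : P // IsAtom a} => a.val ≤ p)).sup g = coordGen m p := by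
    intro p
    rw [himgset, himg, atoms_sup hP]
  set φ : P → LcmLat g := fun p =>
    ⟨coordGen m p, Finset.univ.filter (fun a : {a : P // IsAtom a} => a.val ≤ p),
      (hφval p).symm⟩ with hφ
  have hinj : Function.Injective φ := by
    intro p q hpq
    have hval : coordGen m p = coordGen m q := congrArg Subtype.val hpq
    exact le_antisymm (coordGen_reflect h1 h2 hval.le) (coordGen_reflect h1 h2 hval.ge)
  have hsurj : Function.Surjective φ := by
    rintro ⟨l, s, rfl⟩
    refine ⟨(s.image Subtype.val).sup id, Subtype.ext ?_⟩
    exact (himgset s).symm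
  refine ⟨{ toEquiv := Equiv.ofBijective φ ⟨hinj, hsurj⟩, map_rel_iff' := ?_ }⟩
  intro a b
  show φ a ≤ φ b ↔ a ≤ b
  rw [hφ]
  constructor
  · exact fun h => coordGen_reflect h1 h2 h
  · exact fun h => coordGen_mono m h
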